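/- arXiv:2210.07502 — 3 statements merged into one kernel-verified Lean document; each statement's English description precedes it below -/
import Mathlib

section
/- For any real numbers λ, ε with 0 ≤ λ, 0 < ε or λ > 0 (so λ + ε > 0), λ + ε ≤ 1, and any nonnegative reals S, B, T with λ·S ≤ B, (λ+ε)·S > B, S ≤ T, and B > 0, we have (1/(λ+ε) − 1)·(B − (λ+ε)) ≥ (1 − λ)·S − 1 − T²·ε/B − 2 + 1, i.e., (1/(λ+ε) − 1)·(B − (λ+ε)) ≥ (1 − λ)·S − T²·ε/B − 2. -/
theorem stmt_1 (l e S B T : ℝ) (hl : 0 ≤ l) (he : 0 ≤ e) (hle0 : 0 < l + e)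
    (hle1 : l + e ≤ 1) (hS : 0 ≤ S) (hT : 0 ≤ T) (hB : 0 < B)
    (h1 : l * S ≤ B) (h2 : (l + e) * S > B) (hST : S ≤ T) :
    (1 / (l + e) - 1) * (B - (l + e)) ≥ (1 - l) * S - T ^ 2 * e / B - 2 := by
  rw [ge_iff_le, ← sub_nonneg]
  have hkey : (1 / (l + e) - 1) * (B - (l + e)) - ((1 - l) * S - T ^ 2 * e / B - 2) =
      (B ^ 2 + (l + e) ^ 2 * B + (l + e) * B + e * T ^ 2 * (l + e) - B ^ 2 * (l + e)
        - (1 - l) * S * (l + e) * B) / ((l + e) * B) := by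
    field_simp
    ring
  rw [hkey]
  apply div_nonneg
  · nlinarith [mul_nonneg (sub_nonneg.2 hle1) (by nlinarith : (0:ℝ) ≤ B - (l + e) * S + e * S),
      mul_nonneg (mul_nonneg he hS) (le_of_lt (sub_pos.2 h2)),
      mul_nonneg (mul_nonneg he (sub_nonneg.2 hST)) (by linarith : (0:ℝ) ≤ T + S),
      mul_pos hle0 hB]
  · positivity
end

section
/- Consider T rounds with values v_t ∈ [0,1] and highest competing bids d_t ≥ 0, a budget B with 0 < B ≤ T, and for a shading multiplier λ ∈ [0,1] define the greedy budget-constrained outcome: the player bids min(λ·v_t, remaining budget), wins round t if her bid exceeds d_t, pays her bid when winning, and gains value v_t; let Û(λ) be her total value minus total payment. Let 𝒯 be the set of rounds where the player using λ wins while bidding exactly λ·v_t (not budget-constrained). Then Û(λ) ≤ Σ_{t∈𝒯} (1−λ)·v_t + 1. -/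
open scoped Classical

/-- One round of the greedy budget-constrained bidder with shading multiplier `lam`:
state is (remaining budget, accumulated utility); the bid is `min (lam * v t)`
(remaining budget); the player wins iff her bid strictly exceeds `d t`, paying her
bid and gaining value `v t`. -/
noncomputable def auctionStep (v d : ℕ → ℝ) (lam : ℝ) (s : ℝ × ℝ) (t : ℕ) : ℝ × ℝ :=
  if d t < min (lam * v t) s.1 then
    (s.1 - min (lam * v t) s.1, s.2 + (v t - min (lam * v t) s.1))
  else s

/-- State (remaining budget, utility) after the first `t` rounds, starting with budget `B`. -/
noncomputable def auctionState (v d : ℕ → ℝ) (B lam : ℝ) (t : ℕ) : ℝ × ℝ :=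
  (List.range t).foldl (auctionStep v d lam) (B, 0)

/-- `Û(lam)`: total utility of the greedy budget-constrained bidder over `T` rounds. -/
noncomputable def Uhat (T : ℕ) (v d : ℕ → ℝ) (B lam : ℝ) : ℝ :=
  (auctionState v d B lam T).2

theorem stmt_4 (T : ℕ) (v d : ℕ → ℝ) (B lam : ℝ)
    (hv : ∀ t, v t ∈ Set.Icc (0 : ℝ) 1) (hd : ∀ t, 0 ≤ d t)
    (hB : 0 < B) (hBT : B ≤ T) (hlam : lam ∈ Set.Icc (0 : ℝ) 1) :
    Uhat T v d B lam ≤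
      (∑ t ∈ (Finset.range T).filter
        (fun t => lam * v t ≤ (auctionState v d B lam t).1 ∧ d t < lam * v t),
        (1 - lam) * v t) + 1 := by
  obtain ⟨hl0, hl1⟩ := hlam
  have hsucc : ∀ t, auctionState v d B lam (t + 1)
      = auctionStep v d lam (auctionState v d B lam t) t := by
    intro t
    simp [auctionState, List.range_succ]
  have key : ∀ t, 0 ≤ (auctionState v d B lam t).1 ∧
      (auctionState v d B lam t).2 ≤
        (∑ i ∈ Finset.range t,
          if (lam * v i ≤ (auctionState v d B lam i).1 ∧ d i < lam * v i)
          then (1 - lam) * v i else 0) +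
        (if (auctionState v d B lam t).1 = 0 then 1 else 0) := by
    intro t
    induction t with
    | zero =>
      have : auctionState v d B lam 0 = (B, 0) := by simp [auctionState]
      rw [this]
      refine ⟨hB.le, ?_⟩
      simp only [Finset.range_zero, Finset.sum_empty, zero_add]
      split <;> norm_num
    | succ t ih =>
      obtain ⟨ihb, ihu⟩ := ih
      rw [hsucc, Finset.sum_range_succ]
      set st := auctionState v d B lam t with hst
      unfold auctionStep
      by_cases hw : d t < min (lam * v t) st.1
      · have hst1pos : 0 < st.1 := by
          by_contra h
          push_neg at h
          have : min (lam * v t) st.1 ≤ st.1 := min_le_right _ _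
          linarith [hd t]
        have hne : ¬ st.1 = 0 := ne_of_gt hst1pos
        rw [if_neg hne] at ihu
        by_cases hle : lam * v t ≤ st.1
        · have hmin : min (lam * v t) st.1 = lam * v t := min_eq_left hle
          rw [if_pos hw, hmin]
          have hcond : (lam * v t ≤ st.1 ∧ d t < lam * v t) := by
            refine ⟨hle, ?_⟩
            rw [hmin] at hw; exact hw
          rw [if_pos hcond]
          constructor
          · simp only
            linarith
          · simp only
            have : (0:ℝ) ≤ (if st.1 - lam * v t = 0 then (1:ℝ) else 0) := by
              split <;> norm_num
            linarith
        · push_neg at hle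
          have hmin : min (lam * v t) st.1 = st.1 := min_eq_right hle.le
          rw [if_pos hw, hmin]
          have hcond : ¬ (lam * v t ≤ st.1 ∧ d t < lam * v t) := by
            intro h; exact absurd h.1 (not_le.mpr hle)
          rw [if_neg hcond]
          constructor
          · simp
          · simp only
            have hv1 := (hv t).2
            rw [sub_self, if_pos rfl]
            linarith
      · rw [if_neg hw]
        have hcond : ¬ (lam * v t ≤ st.1 ∧ d t < lam * v t) := by
          rintro ⟨h1, h2⟩
          exact hw (by rw [min_eq_left h1]; exact h2)
        rw [if_neg hcond]
        exact ⟨ihb, by linarith⟩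
  have h := (key T).2
  rw [Finset.sum_filter]
  have hif : (if (auctionState v d B lam T).1 = 0 then (1:ℝ) else 0) ≤ 1 := by
    split <;> norm_num
  calc Uhat T v d B lam ≤ _ := h
    _ ≤ _ := by linarith
end

section
/- Consider T rounds with values v_t ∈ [0,1] and highest competing bids d_t ≥ 0, a budget B with 0 < B ≤ T, and let Û(λ) be the utility of the greedy budget-constrained bidder using shading multiplier λ (bidding min(λ·v_t, remaining budget), winning when the bid strictly exceeds d_t, utility = value won minus payment). Then for any λ ∈ [0,1] and ε ∈ [0, 1−λ], Û(λ+ε) ≥ Û(λ) − T²·ε/B − 2. -/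
open scoped Classical

section Aux

variable {v d : ℕ → ℝ} {B : ℝ}

lemma auctionState_zero (μ : ℝ) : auctionState v d B μ 0 = (B, 0) := rfl

lemma auctionState_succ (μ : ℝ) (t : ℕ) :
    auctionState v d B μ (t + 1) = auctionStep v d μ (auctionState v d B μ t) t := by
  unfold auctionState
  rw [List.range_succ, List.foldl_append, List.foldl_cons, List.foldl_nil]

lemma bud_nonneg (hB : 0 ≤ B) (μ : ℝ) : ∀ t, 0 ≤ (auctionState v d B μ t).1 := by
  intro t
  induction t with
  | zero => simpa [auctionState_zero] using hB
  | succ t ih =>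
    rw [auctionState_succ]
    unfold auctionStep
    split
    · have h := min_le_right (μ * v t) (auctionState v d B μ t).1
      simp only
      linarith
    · exact ih

lemma bud_step_le (hμ : 0 ≤ μ) (hv0 : ∀ t, 0 ≤ v t) (hB : 0 ≤ B) (t : ℕ) :
    (auctionState v d B μ (t + 1)).1 ≤ (auctionState v d B μ t).1 := by
  rw [auctionState_succ]
  unfold auctionStep
  split
  · have h : (0:ℝ) ≤ min (μ * v t) (auctionState v d B μ t).1 :=
      le_min (mul_nonneg hμ (hv0 t)) (bud_nonneg hB μ t)
    simp only
    linarith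
  · exact le_rfl

lemma bud_antitone (hμ : 0 ≤ μ) (hv0 : ∀ t, 0 ≤ v t) (hB : 0 ≤ B) {t u : ℕ} (h : t ≤ u) :
    (auctionState v d B μ u).1 ≤ (auctionState v d B μ t).1 := by
  induction u, h using Nat.le_induction with
  | base => exact le_refl _
  | succ u hu ih => exact le_trans (bud_step_le hμ hv0 hB u) ih

lemma spend_le (hμ : 0 ≤ μ) (hv1 : ∀ t, v t ≤ 1) (t : ℕ) :
    B - (auctionState v d B μ t).1 ≤ μ * t := by
  induction t with
  | zero => simp [auctionState_zero]
  | succ t ih =>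
    rw [auctionState_succ]
    unfold auctionStep
    split
    · have h1 : min (μ * v t) (auctionState v d B μ t).1 ≤ μ * v t := min_le_left _ _
      have h2 : μ * v t ≤ μ * 1 := mul_le_mul_of_nonneg_left (hv1 t) hμ
      simp only
      push_cast
      nlinarith
    · push_cast; nlinarith

/-- Lower bound on utility in terms of spend: `(1-μ)·spend ≤ μ·U`. -/
lemma util_lower (hμ1 : μ ≤ 1) (t : ℕ) :
    (1 - μ) * (B - (auctionState v d B μ t).1) ≤ μ * (auctionState v d B μ t).2 := by
  induction t with
  | zero => simp [auctionState_zero]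
  | succ t ih =>
    rw [auctionState_succ]
    unfold auctionStep
    split
    · have h1 : min (μ * v t) (auctionState v d B μ t).1 ≤ μ * v t := min_le_left _ _
      simp only
      nlinarith
    · exact ih

/-- Per-step utility gain is nonnegative. -/
lemma util_nonneg (hμ1 : μ ≤ 1) (hv0 : ∀ t, 0 ≤ v t) (t : ℕ) :
    0 ≤ (auctionState v d B μ t).2 := by
  induction t with
  | zero => simp [auctionState_zero]
  | succ t ih =>
    rw [auctionState_succ]
    unfold auctionStep
    split
    · have h1 : min (μ * v t) (auctionState v d B μ t).1 ≤ μ * v t := min_le_left _ _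
      have h2 : μ * v t ≤ v t := by nlinarith [hv0 t]
      simp only
      nlinarith
    · exact ih

/-- Upper bounds on the utility: the disjunctive invariant tracking budget exhaustion. -/
lemma util_upper (hμ0 : 0 ≤ μ) (hμ1 : μ ≤ 1) (hv : ∀ t, v t ∈ Set.Icc (0:ℝ) 1)
    (hd : ∀ t, 0 ≤ d t) (hB : 0 ≤ B) : ∀ t : ℕ,
    ((auctionState v d B μ t).2 ≤ (1 - μ) * t ∧
      μ * (auctionState v d B μ t).2 ≤ (1 - μ) * (B - (auctionState v d B μ t).1))
    ∨ ((auctionState v d B μ t).1 = 0 ∧ (auctionState v d B μ t).2 ≤ (1 - μ) * t + 1 ∧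
      μ * (auctionState v d B μ t).2 ≤ (1 - μ) * B + μ) := by
  intro t
  induction t with
  | zero => left; constructor <;> simp [auctionState_zero]
  | succ t ih =>
    have hv0 := (hv t).1
    have hv1 := (hv t).2
    rcases ih with ⟨h1, h2⟩ | ⟨hz, h1, h2⟩
    · rw [auctionState_succ]
      unfold auctionStep
      split
      · rename_i hw
        by_cases hm : μ * v t ≤ (auctionState v d B μ t).1
        · left
          rw [min_eq_left hm] at *
          constructor
          · simp only; push_cast; nlinarith
          · simp only; nlinarith
        · right
          push_neg at hm
          rw [min_eq_right hm.le] at *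
          have hb0 : 0 ≤ (auctionState v d B μ t).1 := bud_nonneg hB μ t
          have hμv : μ * v t ≤ μ := by nlinarith
          refine ⟨by simp, ?_, ?_⟩
          · simp only; push_cast; nlinarith
          · simp only; nlinarith
      · left
        exact ⟨by push_cast; nlinarith, h2⟩
    · rw [auctionState_succ]
      unfold auctionStep
      have hmin : min (μ * v t) (auctionState v d B μ t).1 = 0 := by
        rw [hz]
        exact min_eq_right (mul_nonneg hμ0 hv0)
      rw [hmin]
      have : ¬ d t < 0 := not_lt.2 (hd t)
      rw [if_neg this]
      exact Or.inr ⟨hz, by push_cast; nlinarith, h2⟩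

/-- Coupled comparison while the `b`-run is never budget-constrained. -/
lemma coupled (a b : ℝ) (ha0 : 0 ≤ a) (hab : a ≤ b) (hb1 : b ≤ 1)
    (hv : ∀ t, v t ∈ Set.Icc (0:ℝ) 1) (hd : ∀ t, 0 ≤ d t) (hB : 0 ≤ B) (T : ℕ)
    (hGood : ∀ s, s < T → b * v s ≤ (auctionState v d B b s).1) :
    ∀ t, t ≤ T →
      ((auctionState v d B a t).2 - (b - a) * t ≤ (auctionState v d B b t).2)
      ∨ ((auctionState v d B a t).1 = 0 ∧
         (auctionState v d B a t).2 - (b - a) * t - 1 ≤ (auctionState v d B b t).2) := by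
  intro t
  induction t with
  | zero => intro _; left; simp [auctionState_zero]
  | succ t ih =>
    intro hT
    have htT : t < T := hT
    have ihh := ih (le_of_lt htT)
    have hv0 := (hv t).1
    have hv1 := (hv t).2
    have hGt := hGood t htT
    have hminb : min (b * v t) (auctionState v d B b t).1 = b * v t := min_eq_left hGt
    have hbge : (auctionState v d B b t).2 ≤ (auctionState v d B b (t+1)).2 := by
      rw [auctionState_succ]
      unfold auctionStep
      split
      · have h1 : min (b * v t) (auctionState v d B b t).1 ≤ b * v t := min_le_left _ _
        simp only
        nlinarith
      · exact le_rfl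
    rcases ihh with hL | ⟨hz, hR⟩
    · by_cases hwa : d t < min (a * v t) (auctionState v d B a t).1
      · have h1 : min (a * v t) (auctionState v d B a t).1 ≤ a * v t := min_le_left _ _
        have havbv : a * v t ≤ b * v t := mul_le_mul_of_nonneg_right hab hv0
        have hwb : d t < b * v t := lt_of_lt_of_le hwa (le_trans h1 havbv)
        have hb2 : (auctionState v d B b (t+1)).2
            = (auctionState v d B b t).2 + (v t - b * v t) := by
          rw [auctionState_succ]
          unfold auctionStep
          rw [hminb, if_pos hwb]
        by_cases hma : a * v t ≤ (auctionState v d B a t).1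
        · left
          have ha2 : (auctionState v d B a (t+1)).2
              = (auctionState v d B a t).2 + (v t - a * v t) := by
            rw [auctionState_succ]
            unfold auctionStep
            rw [if_pos hwa, min_eq_left hma]
          rw [ha2, hb2]
          push_cast
          nlinarith [hL, mul_le_mul_of_nonneg_left hv1 (sub_nonneg.2 hab)]
        · right
          push_neg at hma
          have hmin : min (a * v t) (auctionState v d B a t).1
              = (auctionState v d B a t).1 := min_eq_right hma.le
          have ha1 : (auctionState v d B a (t+1)).1 = 0 := by
            rw [auctionState_succ]
            unfold auctionStep
            rw [if_pos hwa, hmin]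
            simp
          have ha2 : (auctionState v d B a (t+1)).2
              = (auctionState v d B a t).2 + (v t - (auctionState v d B a t).1) := by
            rw [auctionState_succ]
            unfold auctionStep
            rw [if_pos hwa, hmin]
          refine ⟨ha1, ?_⟩
          have hba : 0 ≤ (auctionState v d B a t).1 := bud_nonneg hB a t
          rw [ha2, hb2]
          push_cast
          nlinarith [hL]
      · have ha' : auctionState v d B a (t+1) = auctionState v d B a t := by
          rw [auctionState_succ]
          unfold auctionStep
          rw [if_neg hwa]
        left
        rw [ha']
        push_cast
        nlinarith [hL, hbge]
    · have hmina : min (a * v t) (auctionState v d B a t).1 = 0 := by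
        rw [hz]
        exact min_eq_right (mul_nonneg ha0 hv0)
      have ha' : auctionState v d B a (t+1) = auctionState v d B a t := by
        rw [auctionState_succ]
        unfold auctionStep
        rw [hmina, if_neg (not_lt.2 (hd t))]
      right
      refine ⟨by rw [ha']; exact hz, ?_⟩
      rw [ha']
      push_cast
      nlinarith [hR, hbge]

end Aux

set_option maxHeartbeats 1000000 in
/-- The pure-arithmetic core of the exhaustion case. -/
lemma final_arith (Tr B lam ε Ua Ub : ℝ)
    (hB : 0 < B) (hBT : B ≤ Tr) (hT1 : 1 ≤ Tr)
    (ha0 : 0 ≤ lam) (ha1 : lam ≤ 1) (hε0 : 0 ≤ ε) (hb1 : lam + ε ≤ 1)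
    (hUaT : Ua ≤ (1 - lam) * Tr + 1)
    (hUaB : lam * Ua ≤ (1 - lam) * B + lam)
    (hUb0 : 0 ≤ Ub)
    (hUblow : (1 - (lam + ε)) * (B - (lam + ε)) ≤ (lam + ε) * Ub)
    (hBbT : B < (lam + ε) * Tr) :
    Ua - Tr ^ 2 * ε / B - 2 ≤ Ub := by
  have hE : Tr ^ 2 * ε / B * B = Tr ^ 2 * ε := div_mul_cancel₀ _ (ne_of_gt hB)
  have hEnn : 0 ≤ Tr ^ 2 * ε / B := by positivity
  have hT0 : 0 < Tr := by linarith
  have hbpos : 0 < lam + ε := by nlinarith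
  rcases le_or_gt B lam with hBa | haB
  · -- lam itself is at least B: Ua ≤ 2
    have haP : 0 < lam := lt_of_lt_of_le hB hBa
    nlinarith [mul_le_mul_of_nonneg_left hBa (sub_nonneg.2 ha1)]
  · rcases le_or_gt B (lam + ε) with hbB | hBb
    · -- B ≤ lam + ε  (so ε ≥ B - lam)
      have hεBa : B - lam ≤ ε := by linarith
      rcases le_or_gt B (lam * Tr) with haT | haT
      · -- use the budget-based upper bound on Ua
        have haP : 0 < lam := by nlinarith
        have hE4 : lam * (Tr ^ 2 * ε / B * B) = lam * (Tr ^ 2 * ε) := by rw [hE]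
        have t1 : 0 ≤ (lam * Tr - B) * (B - lam) * Tr :=
          mul_nonneg (mul_nonneg (sub_nonneg.2 haT) (sub_nonneg.2 haB.le)) hT0.le
        have hh : 0 ≤ lam * Tr ^ 2 * B - lam ^ 2 * Tr ^ 2 + lam * B + lam * B ^ 2 - B ^ 2 := by
          rcases le_or_gt Tr (1 + B) with hcase | hcase
          · nlinarith [t1, mul_nonneg (mul_nonneg hB.le ha0) (sub_nonneg.2 hcase),
              mul_nonneg (mul_nonneg hB.le hB.le) (sub_nonneg.2 hT1)]
          · nlinarith [t1,
              mul_nonneg (mul_nonneg hB.le (sub_nonneg.2 haB.le)) (by linarith : (0:ℝ) ≤ Tr - 1 - B),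
              mul_pos (mul_pos hB hB) hB]
        nlinarith [hh, hE4, mul_pos haP hB,
          mul_nonneg (mul_nonneg ha0 ha0) (sq_nonneg Tr),
          mul_nonneg ha0 (sq_nonneg Tr)]
      · -- use the time-based upper bound on Ua
        nlinarith [hE, mul_nonneg (sub_nonneg.2 haT.le) (sub_nonneg.2 hBT),
          sq_nonneg (Tr - 1), mul_pos hT0 hB,
          mul_nonneg (sub_nonneg.2 hεBa) (sq_nonneg Tr)]
    · -- lam + ε < B
      rcases le_or_gt (B ^ 2) (lam * (lam + ε) * Tr ^ 2) with habT | habT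
      · have haP : 0 < lam := by
          by_contra hcon
          push_neg at hcon
          have h1 : lam * ((lam + ε) * Tr ^ 2) ≤ 0 :=
            mul_nonpos_iff.mpr (Or.inr ⟨hcon, mul_nonneg hbpos.le (sq_nonneg Tr)⟩)
          nlinarith [mul_pos hB hB]
        have hE3 : lam * (lam + ε) * (Tr ^ 2 * ε / B * B) = lam * (lam + ε) * (Tr ^ 2 * ε) := by
          rw [hE]
        nlinarith [hE3, mul_pos (mul_pos haP hbpos) hB, mul_pos haP hB,
          mul_pos hbpos hB,
          mul_nonneg hε0 (sub_nonneg.2 habT),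
          mul_nonneg (mul_nonneg ha0 hB.le) (mul_nonneg hbpos.le hbpos.le)]
      · -- time-based bound on Ua against spend-based lower bound on Ub
        have hx : 0 ≤ (lam + ε) * Tr - B := by linarith
        have hc : 0 ≤ Tr - B := by linarith
        have hT1' : 0 ≤ Tr - 1 := by linarith
        have habT' : 0 ≤ B ^ 2 - lam * (lam + ε) * Tr ^ 2 := by linarith
        have hring : Tr ^ 2 * ((1 - (lam + ε)) * (B - (lam + ε)) * B
            + Tr ^ 2 * ε * (lam + ε) + (lam + ε) * B
            - (1 - lam) * Tr * ((lam + ε) * B))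
            = B ^ 3 + ((lam + ε) * Tr - B) * B * Tr
            + ((lam + ε) * Tr - B) * B * (Tr - B) * (Tr - 1)
            + ((lam + ε) * Tr - B) * B ^ 2
            + ((lam + ε) * Tr - B) ^ 2 * Tr * (Tr - B)
            + ((lam + ε) * Tr - B) ^ 2 * B
            + ((lam + ε) * Tr - B) ^ 2 * B * Tr
            + Tr * (B ^ 2 - lam * (lam + ε) * Tr ^ 2) * (Tr - B) := by
          ring
        have hS : 0 ≤ B ^ 3 + ((lam + ε) * Tr - B) * B * Tr
            + ((lam + ε) * Tr - B) * B * (Tr - B) * (Tr - 1)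
            + ((lam + ε) * Tr - B) * B ^ 2
            + ((lam + ε) * Tr - B) ^ 2 * Tr * (Tr - B)
            + ((lam + ε) * Tr - B) ^ 2 * B
            + ((lam + ε) * Tr - B) ^ 2 * B * Tr
            + Tr * (B ^ 2 - lam * (lam + ε) * Tr ^ 2) * (Tr - B) := by
          have p1 : 0 ≤ ((lam + ε) * Tr - B) * B * Tr :=
            mul_nonneg (mul_nonneg hx hB.le) hT0.le
          have p2 : 0 ≤ ((lam + ε) * Tr - B) * B * (Tr - B) * (Tr - 1) :=
            mul_nonneg (mul_nonneg (mul_nonneg hx hB.le) hc) hT1'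
          have p3 : 0 ≤ ((lam + ε) * Tr - B) * B ^ 2 := mul_nonneg hx (sq_nonneg B)
          have p4 : 0 ≤ ((lam + ε) * Tr - B) ^ 2 * Tr * (Tr - B) :=
            mul_nonneg (mul_nonneg (sq_nonneg _) hT0.le) hc
          have p5 : 0 ≤ ((lam + ε) * Tr - B) ^ 2 * B := mul_nonneg (sq_nonneg _) hB.le
          have p6 : 0 ≤ ((lam + ε) * Tr - B) ^ 2 * B * Tr :=
            mul_nonneg (mul_nonneg (sq_nonneg _) hB.le) hT0.le
          have p7 : 0 ≤ Tr * (B ^ 2 - lam * (lam + ε) * Tr ^ 2) * (Tr - B) :=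
            mul_nonneg (mul_nonneg hT0.le habT') hc
          have p0 : 0 ≤ B ^ 3 := by positivity
          linarith
        have hN : 0 ≤ (1 - (lam + ε)) * (B - (lam + ε)) * B
            + Tr ^ 2 * ε * (lam + ε) + (lam + ε) * B
            - (1 - lam) * Tr * ((lam + ε) * B) := by
          nlinarith [hring, hS, mul_pos hT0 hT0]
        have hE2 : (lam + ε) * (Tr ^ 2 * ε / B * B) = (lam + ε) * (Tr ^ 2 * ε) := by rw [hE]
        nlinarith [hN, hE2, mul_pos hbpos hB, hUaT, hUblow, hUb0]

theorem stmt_5 (T : ℕ) (v d : ℕ → ℝ) (B lam ε : ℝ)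
    (hv : ∀ t, v t ∈ Set.Icc (0 : ℝ) 1) (hd : ∀ t, 0 ≤ d t)
    (hB : 0 < B) (hBT : B ≤ T) (hlam : lam ∈ Set.Icc (0 : ℝ) 1)
    (hε0 : 0 ≤ ε) (hε1 : ε ≤ 1 - lam) :
    Uhat T v d B (lam + ε) ≥ Uhat T v d B lam - T ^ 2 * ε / B - 2 := by
  have ha0 : 0 ≤ lam := hlam.1
  have ha1 : lam ≤ 1 := hlam.2
  have hab : lam ≤ lam + ε := by linarith
  have hb0 : 0 ≤ lam + ε := by linarith
  have hb1 : lam + ε ≤ 1 := by linarith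
  have hv0 : ∀ t, 0 ≤ v t := fun t => (hv t).1
  have hv1 : ∀ t, v t ≤ 1 := fun t => (hv t).2
  have hT0R : (0:ℝ) < T := lt_of_lt_of_le hB hBT
  have hT1 : (1:ℝ) ≤ T := by
    have h : (0:ℕ) < T := by exact_mod_cast hT0R
    exact_mod_cast h
  simp only [Uhat, ge_iff_le]
  -- upper bounds on the lam-run utility
  have hbud0 : 0 ≤ (auctionState v d B lam T).1 := bud_nonneg hB.le lam T
  have hupper := util_upper (v := v) (d := d) (B := B) ha0 ha1 hv hd hB.le T
  have hUaT : (auctionState v d B lam T).2 ≤ (1 - lam) * T + 1 := by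
    rcases hupper with ⟨h1, _⟩ | ⟨_, h1, _⟩
    · nlinarith
    · exact h1
  have hUaB : lam * (auctionState v d B lam T).2 ≤ (1 - lam) * B + lam := by
    rcases hupper with ⟨_, h2⟩ | ⟨_, _, h2⟩
    · nlinarith
    · exact h2
  have hUb0 : 0 ≤ (auctionState v d B (lam + ε) T).2 := util_nonneg hb1 hv0 T
  clear hupper
  by_cases hGood : ∀ s, s < T → (lam + ε) * v s ≤ (auctionState v d B (lam + ε) s).1
  · -- the (lam+ε)-run is never budget-constrained
    have hc := coupled lam (lam + ε) ha0 hab hb1 hv hd hB.le T hGood T le_rfl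
    have hεT : ε * T ≤ T ^ 2 * ε / B := by
      rw [le_div_iff₀ hB]
      nlinarith [mul_nonneg (mul_nonneg hε0 hT0R.le) (sub_nonneg.2 hBT)]
    have hEnn : (0:ℝ) ≤ T ^ 2 * ε / B := by positivity
    rcases hc with h | ⟨_, h⟩ <;> nlinarith
  · -- the (lam+ε)-run gets budget-constrained at some round s < T
    push_neg at hGood
    obtain ⟨s, hsT, hs⟩ := hGood
    have hbs0 : 0 ≤ (auctionState v d B (lam + ε) s).1 := bud_nonneg hB.le _ s
    have hbvpos : 0 < (lam + ε) * v s := lt_of_le_of_lt hbs0 hs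
    have hbpos : 0 < lam + ε := by
      by_contra hc
      push_neg at hc
      have h1 : (lam + ε) * v s ≤ 0 := mul_nonpos_iff.mpr (Or.inr ⟨hc, hv0 s⟩)
      linarith
    have hbvs1 : (lam + ε) * v s ≤ lam + ε := by nlinarith [hv1 s, hv0 s]
    have hBudT : (auctionState v d B (lam + ε) T).1 ≤ (auctionState v d B (lam + ε) s).1 :=
      bud_antitone hb0 hv0 hB.le hsT.le
    have hBudTb : (auctionState v d B (lam + ε) T).1 < lam + ε := by linarith
    have hspend : B - (auctionState v d B (lam + ε) s).1 ≤ (lam + ε) * s :=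
      spend_le hb0 hv1 s
    have hs1T : (s:ℝ) + 1 ≤ T := by exact_mod_cast Nat.succ_le_of_lt hsT
    have hBbT : B < (lam + ε) * T := by nlinarith [mul_nonneg hb0 (Nat.cast_nonneg s : (0:ℝ) ≤ s)]
    have hUblow : (1 - (lam + ε)) * (B - (lam + ε))
        ≤ (lam + ε) * (auctionState v d B (lam + ε) T).2 := by
      have h := util_lower (v := v) (d := d) (B := B) hb1 T
      nlinarith [mul_nonneg (sub_nonneg.2 hb1) (sub_nonneg.2 hBudTb.le)]
    exact final_arith T B lam ε _ _ hB hBT hT1 ha0 ha1 hε0 hb1 hUaT hUaB hUb0 hUblow hBbT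
end
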